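/- Let S0(X), S1(X) be [0,1]-valued random variables. Then the span of the uplift bounds, E[min{S0(X), 1 - S1(X)}] - E[max{0, S0(X) - S1(X)}], equals E[min{S0(X), S1(X), 1 - S0(X), 1 - S1(X)}]. -/
import Mathlib

open MeasureTheory

theorem uplift_bounds_span (Ω : Type*) [MeasurableSpace Ω] (P : Measure Ω)
    [IsProbabilityMeasure P] (S0 S1 : Ω → ℝ)
    (hm0 : Measurable S0) (hm1 : Measurable S1)
    (h0 : ∀ ω, S0 ω ∈ Set.Icc (0 : ℝ) 1) (h1 : ∀ ω, S1 ω ∈ Set.Icc (0 : ℝ) 1) :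
    (∫ ω, min (S0 ω) (1 - S1 ω) ∂P) - ∫ ω, max 0 (S0 ω - S1 ω) ∂P =
      ∫ ω, min (min (S0 ω) (S1 ω)) (min (1 - S0 ω) (1 - S1 ω)) ∂P := by
  have hf : Integrable (fun ω => min (S0 ω) (1 - S1 ω)) P := by
    refine Integrable.mono' (integrable_const 1) ?_ ?_
    · exact ((hm0.min (measurable_const.sub hm1))).aestronglyMeasurable
    · filter_upwards with ω
      have := (h0 ω).1; have := (h0 ω).2; have := (h1 ω).1; have := (h1 ω).2
      rw [Real.norm_eq_abs, abs_le]
      refine ⟨le_min (by linarith) (by linarith), (min_le_left _ _).trans (by linarith)⟩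
  have hg : Integrable (fun ω => max 0 (S0 ω - S1 ω)) P := by
    refine Integrable.mono' (integrable_const 1) ?_ ?_
    · exact (measurable_const.max (hm0.sub hm1)).aestronglyMeasurable
    · filter_upwards with ω
      have := (h0 ω).1; have := (h0 ω).2; have := (h1 ω).1; have := (h1 ω).2
      rw [Real.norm_eq_abs, abs_le]
      refine ⟨le_trans (by linarith) (le_max_left _ _), max_le (by linarith) (by linarith)⟩
  rw [← integral_sub hf hg]
  refine integral_congr_ae (Filter.Eventually.of_forall fun ω => ?_)
  rcases le_total (S0 ω) (S1 ω) with h | h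
  · have h1' : max 0 (S0 ω - S1 ω) = 0 := max_eq_left (by linarith)
    have h2 : min (S0 ω) (S1 ω) = S0 ω := min_eq_left h
    have h3 : min (1 - S0 ω) (1 - S1 ω) = 1 - S1 ω := min_eq_right (by linarith)
    simp only [h1', h2, h3, sub_zero]
  · have h1' : max 0 (S0 ω - S1 ω) = S0 ω - S1 ω := max_eq_right (by linarith)
    have h2 : min (S0 ω) (S1 ω) = S1 ω := min_eq_right h
    have h3 : min (1 - S0 ω) (1 - S1 ω) = 1 - S0 ω := min_eq_left (by linarith)
    simp only [h1', h2, h3]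
    rcases le_total (S0 ω) (1 - S1 ω) with h4 | h4
    · rw [min_eq_left h4, min_eq_left (by linarith : S1 ω ≤ 1 - S0 ω)]; ring
    · rw [min_eq_right h4, min_eq_right (by linarith : 1 - S0 ω ≤ S1 ω)]; ring
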